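/- For random variables X and Y with finite means and finite E[X·1{Y>y}], the covariance Cov[X, 1{Y>y}] equals the integral over x of Cov[1{X>x}, 1{Y>y}] dx. -/

import Mathlib

open MeasureTheory Set

lemma g_eq (a : ℝ) :
    (fun x : ℝ => (if a > x then (1:ℝ) else 0) - (if (0:ℝ) > x then 1 else 0))
      = fun x => (Ico (0:ℝ) a).indicator (fun _ => (1:ℝ)) x
          - (Ico a (0:ℝ)).indicator (fun _ => (1:ℝ)) x := by
  funext x
  simp only [Set.indicator_apply, Set.mem_Ico]
  split_ifs <;> simp_all <;> linarith

lemma g_integrable (a : ℝ) :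
    Integrable (fun x : ℝ => (if a > x then (1:ℝ) else 0) - (if (0:ℝ) > x then 1 else 0)) := by
  rw [g_eq]
  apply Integrable.sub <;>
  · rw [integrable_indicator_iff measurableSet_Ico]
    exact integrableOn_const measure_Ico_lt_top.ne

lemma g_integral (a : ℝ) :
    ∫ x : ℝ, ((if a > x then (1:ℝ) else 0) - (if (0:ℝ) > x then 1 else 0)) = a := by
  rw [g_eq, integral_sub, integral_indicator measurableSet_Ico,
    integral_indicator measurableSet_Ico]
  · simp only [integral_const, measureReal_def, Measure.restrict_apply_univ, Real.volume_Ico, smul_eq_mul, mul_one]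
    rcases le_or_gt 0 a with h | h
    · rw [ENNReal.toReal_ofReal (by linarith : (0:ℝ) ≤ a - 0), ENNReal.ofReal_eq_zero.2 (by linarith)]; simp
    · rw [ENNReal.toReal_ofReal (by linarith : (0:ℝ) ≤ 0 - a), ENNReal.ofReal_eq_zero.2 (by linarith)]; simp
  all_goals
    rw [integrable_indicator_iff measurableSet_Ico]
    exact integrableOn_const measure_Ico_lt_top.ne

lemma g_norm_integral (a : ℝ) :
    ∫ x : ℝ, ‖(if a > x then (1:ℝ) else 0) - (if (0:ℝ) > x then 1 else 0)‖ = |a| := by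
  rcases le_or_gt 0 a with h | h
  · have he : ∀ x : ℝ, ‖(if a > x then (1:ℝ) else 0) - (if (0:ℝ) > x then 1 else 0)‖
        = (if a > x then (1:ℝ) else 0) - (if (0:ℝ) > x then 1 else 0) := by
      intro x; rw [Real.norm_eq_abs, abs_of_nonneg]
      split_ifs <;> simp_all <;> linarith
    simp only [he]; rw [g_integral, abs_of_nonneg h]
  · have he : ∀ x : ℝ, ‖(if a > x then (1:ℝ) else 0) - (if (0:ℝ) > x then 1 else 0)‖
        = -((if a > x then (1:ℝ) else 0) - (if (0:ℝ) > x then 1 else 0)) := by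
      intro x; rw [Real.norm_eq_abs, abs_of_nonpos]
      split_ifs <;> norm_num <;> linarith
    simp only [he]; rw [integral_neg, g_integral, abs_of_neg h]

theorem cov_indicator_repr {Ω : Type*} [MeasurableSpace Ω]
    (μ : Measure Ω) [IsProbabilityMeasure μ]
    (X Y : Ω → ℝ) (hX : Measurable X) (hY : Measurable Y)
    (hXint : Integrable X μ)
    (y : ℝ)
    (hprod : Integrable (fun ω => X ω * (if Y ω > y then (1:ℝ) else 0)) μ) :
    (∫ ω, X ω * (if Y ω > y then (1:ℝ) else 0) ∂μ)
      - (∫ ω, X ω ∂μ) * (∫ ω, (if Y ω > y then (1:ℝ) else 0) ∂μ)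
    = ∫ x : ℝ,
        ((∫ ω, (if X ω > x then (1:ℝ) else 0) * (if Y ω > y then (1:ℝ) else 0) ∂μ)
          - (∫ ω, (if X ω > x then (1:ℝ) else 0) ∂μ)
            * (∫ ω, (if Y ω > y then (1:ℝ) else 0) ∂μ)) := by
  set p := ∫ ω, (if Y ω > y then (1:ℝ) else 0) ∂μ with hp
  have mB : Measurable fun ω => (if Y ω > y then (1:ℝ) else 0) :=
    Measurable.ite (measurableSet_lt measurable_const hY) measurable_const measurable_const
  have bdd1 : ∀ {g : Ω → ℝ}, Measurable g → (∀ ω, ‖g ω‖ ≤ 1) → Integrable g μ :=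
    fun hm hb => (integrable_const (1:ℝ)).mono' hm.aestronglyMeasurable (ae_of_all _ hb)
  have hBnorm : ∀ ω, ‖(if Y ω > y then (1:ℝ) else 0)‖ ≤ 1 := fun ω => by split_ifs <;> simp
  have hBint : Integrable (fun ω => (if Y ω > y then (1:ℝ) else 0)) μ := bdd1 mB hBnorm
  have hp0 : 0 ≤ p := integral_nonneg fun ω => by dsimp; split_ifs <;> norm_num
  have hp1 : p ≤ 1 := by
    have := integral_mono hBint (integrable_const (1:ℝ))
      (fun ω => by dsimp; split_ifs <;> norm_num)
    simpa using this
  set f : Ω → ℝ → ℝ := fun ω x =>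
    ((if Y ω > y then (1:ℝ) else 0) - p)
      * ((if X ω > x then (1:ℝ) else 0) - (if (0:ℝ) > x then 1 else 0)) with hf
  have mf : Measurable (Function.uncurry f) := by
    apply Measurable.mul
    · exact (mB.comp measurable_fst).sub measurable_const
    · exact (Measurable.ite (measurableSet_lt measurable_snd (hX.comp measurable_fst))
        measurable_const measurable_const).sub
        (Measurable.ite (measurableSet_lt measurable_snd measurable_const)
          measurable_const measurable_const)
  have hnormint : ∀ ω, (∫ x : ℝ, ‖f ω x‖)
      = |(if Y ω > y then (1:ℝ) else 0) - p| * |X ω| := by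
    intro ω
    simp only [hf, norm_mul]
    rw [integral_const_mul, g_norm_integral, Real.norm_eq_abs]
  have hfint : Integrable (Function.uncurry f) (μ.prod volume) := by
    rw [integrable_prod_iff mf.aestronglyMeasurable]
    constructor
    · refine ae_of_all _ fun ω => ?_
      simp only [Function.uncurry_apply_pair, hf]
      exact (g_integrable (X ω)).const_mul _
    · simp only [Function.uncurry]
      simp only [hnormint]
      apply Integrable.mono' (hXint.norm.const_mul 2)
      · exact (((mB.sub measurable_const).abs).mul hX.abs).aestronglyMeasurable
      · refine ae_of_all _ fun ω => ?_
        rw [Real.norm_eq_abs, abs_mul, abs_abs, abs_abs]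
        have hb := hBnorm ω
        rw [Real.norm_eq_abs] at hb
        have h2 : |(if Y ω > y then (1:ℝ) else 0) - p| ≤ 2 := by
          have hpabs : |p| ≤ 1 := abs_le.2 ⟨by linarith, hp1⟩
          calc |(if Y ω > y then (1:ℝ) else 0) - p|
              ≤ |(if Y ω > y then (1:ℝ) else 0)| + |p| := abs_sub _ _
            _ ≤ 2 := by linarith
        rw [Real.norm_eq_abs]
        exact mul_le_mul_of_nonneg_right h2 (abs_nonneg _)
  have key := integral_integral_swap hfint
  have left1 : ∀ ω, (∫ x : ℝ, f ω x)
      = ((if Y ω > y then (1:ℝ) else 0) - p) * X ω := by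
    intro ω
    simp only [hf]
    rw [integral_const_mul, g_integral]
  have leftint : (∫ ω, ((if Y ω > y then (1:ℝ) else 0) - p) * X ω ∂μ)
      = (∫ ω, X ω * (if Y ω > y then (1:ℝ) else 0) ∂μ) - (∫ ω, X ω ∂μ) * p := by
    have e : ∀ ω, ((if Y ω > y then (1:ℝ) else 0) - p) * X ω
        = X ω * (if Y ω > y then (1:ℝ) else 0) - p * X ω := fun ω => by ring
    simp only [e]
    rw [integral_sub hprod (hXint.const_mul p), integral_const_mul]; ring
  have right : ∀ x : ℝ, (∫ ω, f ω x ∂μ) =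
      (∫ ω, (if X ω > x then (1:ℝ) else 0) * (if Y ω > y then (1:ℝ) else 0) ∂μ)
        - (∫ ω, (if X ω > x then (1:ℝ) else 0) ∂μ) * p := by
    intro x
    have mI : Measurable fun ω => (if X ω > x then (1:ℝ) else 0) :=
      Measurable.ite (measurableSet_lt measurable_const hX) measurable_const measurable_const
    have hInorm : ∀ ω, ‖(if X ω > x then (1:ℝ) else 0)‖ ≤ 1 := fun ω => by split_ifs <;> simp
    have hIint := bdd1 mI hInorm
    have hIBint : Integrable
        (fun ω => (if X ω > x then (1:ℝ) else 0) * (if Y ω > y then (1:ℝ) else 0)) μ :=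
      bdd1 (mI.mul mB) (fun ω => by
        rw [norm_mul]
        exact mul_le_one₀ (hInorm ω) (norm_nonneg _) (hBnorm ω))
    have e : ∀ ω, f ω x =
        ((if X ω > x then (1:ℝ) else 0) * (if Y ω > y then (1:ℝ) else 0)
          - p * (if X ω > x then (1:ℝ) else 0))
        - (if (0:ℝ) > x then (1:ℝ) else 0) * ((if Y ω > y then (1:ℝ) else 0) - p) := by
      intro ω; simp only [hf]; ring
    simp only [e]
    have h1 : Integrable (fun ω => (if X ω > x then (1:ℝ) else 0) * (if Y ω > y then (1:ℝ) else 0)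
        - p * (if X ω > x then (1:ℝ) else 0)) μ := hIBint.sub (hIint.const_mul p)
    have h2 : Integrable (fun ω => (if (0:ℝ) > x then (1:ℝ) else 0)
        * ((if Y ω > y then (1:ℝ) else 0) - p)) μ := (hBint.sub (integrable_const p)).const_mul _
    rw [integral_sub h1 h2, integral_sub hIBint (hIint.const_mul p), integral_const_mul,
      integral_const_mul, integral_sub hBint (integrable_const p), integral_const, ← hp]
    simp [measure_univ]
    ring
  rw [← leftint]
  simp only [← left1]
  rw [key]
  exact integral_congr_ae (ae_of_all _ right)
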